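/- In Γ_Δ(D), for a vertex X and Y = 12⋯D, the distance d(X,Y) = D holds if and only if either the letter D does not occur in X, or D occurs in X at position j and some x_r with r < j is greater than D. -/

import Mathlib

/-- `l` is a vertex of the cycle prefix digraph `Γ_Δ(D)`: a sequence of `D`
distinct letters from the alphabet `{1, …, Δ+1}`. -/
def IsVtx (Δ D : ℕ) (l : List ℕ) : Prop :=
  l.length = D ∧ l.Nodup ∧ ∀ x ∈ l, 1 ≤ x ∧ x ≤ Δ + 1

/-- Adjacency in `Γ_Δ(D, -r)` (for `r = 0` this is `Γ_Δ(D)` itself): arcs are the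
rotations `R_k` for `r+2 ≤ k ≤ D` (0-indexed: move the letter at index `j`,
`r+1 ≤ j ≤ D-1`, to the front) and the shifts `S_y` for letters `y` not in the
sequence. -/
def adjR (Δ D r : ℕ) (X Y : List ℕ) : Prop :=
  IsVtx Δ D X ∧ IsVtx Δ D Y ∧
    ((∃ j, r + 1 ≤ j ∧ j < D ∧ Y = X.getD j 0 :: X.eraseIdx j) ∨
     (∃ y, y ∉ X ∧ Y = y :: X.dropLast))

/-- `w` is a directed walk of length `n` from `u` to `v` in the digraph with
adjacency relation `A`. -/
def IsWalk {V : Type*} (A : V → V → Prop) (u v : V) (n : ℕ) (w : ℕ → V) : Prop :=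
  w 0 = u ∧ w n = v ∧ ∀ i < n, A (w i) (w (i + 1))

/-- Directed distance: the least length of a directed walk from `u` to `v`. -/
noncomputable def cpDist {V : Type*} (A : V → V → Prop) (u v : V) : ℕ :=
  sInf {n | ∃ w, IsWalk A u v n w}

/-- in `Γ_Δ(D)` with `Y = 12⋯D`, the distance `d(X, Y) = D` iff
either `D` does not occur in `X`, or `D` occurs at position `j` and some earlier
letter `x_r` (`r < j`) exceeds `D`. -/

def P (D : ℕ) : ℕ → List ℕ → Prop
  | v, [] => D < v
  | v, a :: t => D < v ∨ (if a = v then P D (v + 1) t else a < v ∧ P D v t)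

/-- The key invariant: `Z` contains `v, v+1, …, D` as a subsequence, and every
letter scanned before the match of a value is smaller than that value. -/

lemma P_of_lt {D v : ℕ} (h : D < v) : ∀ Z, P D v Z
  | [] => h
  | _ :: _ => Or.inl h

lemma P_mono {D : ℕ} : ∀ (Z : List ℕ) {v v' : ℕ}, v ≤ v' → P D v Z → P D v' Z := by
  intro Z
  induction Z with
  | nil => intro v v' hle h; exact lt_of_lt_of_le h hle
  | cons a t ih =>
    intro v v' hle h
    rcases h with h | h
    · exact Or.inl (lt_of_lt_of_le h hle)
    · right
      by_cases hav : a = v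
      · rw [if_pos hav] at h
        by_cases hav' : a = v'
        · rw [if_pos hav']; exact ih (by omega) h
        · rw [if_neg hav']
          exact ⟨by omega, ih (by omega) h⟩
      · rw [if_neg hav] at h
        obtain ⟨h1, h2⟩ := h
        have hav' : a ≠ v' := by omega
        rw [if_neg hav']
        exact ⟨by omega, ih hle h2⟩

lemma P_insert {D : ℕ} : ∀ (Z : List ℕ) (j v : ℕ), j < Z.length → Z.getD j 0 < v →
    P D v (Z.eraseIdx j) → P D v Z := by
  intro Z
  induction Z with
  | nil => intro j v hj; simp at hj
  | cons a t ih =>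
    intro j v hj hsm h
    cases j with
    | zero =>
      simp only [List.getD_cons_zero] at hsm
      simp only [List.eraseIdx_cons_zero] at h
      exact Or.inr (by rw [if_neg (by omega : a ≠ v)]; exact ⟨hsm, h⟩)
    | succ j =>
      simp only [List.getD_cons_succ] at hsm
      simp only [List.eraseIdx_cons_succ] at h
      rcases h with h | h
      · exact Or.inl h
      · right
        by_cases hav : a = v
        · rw [if_pos hav] at h ⊢
          exact ih j (v + 1) (by simpa using hj) (by omega) h
        · rw [if_neg hav] at h ⊢
          exact ⟨h.1, ih j v (by simpa using hj) hsm h.2⟩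

lemma P_erase {D : ℕ} : ∀ (Z : List ℕ) (q v : ℕ), q < Z.length → Z.getD q 0 < v →
    P D v Z → P D v (Z.eraseIdx q) := by
  intro Z
  induction Z with
  | nil => intro q v hq; simp at hq
  | cons a t ih =>
    intro q v hq hsm h
    cases q with
    | zero =>
      simp only [List.getD_cons_zero] at hsm
      simp only [List.eraseIdx_cons_zero]
      rcases h with h | h
      · exact P_of_lt h t
      · rw [if_neg (by omega : a ≠ v)] at h
        exact h.2
    | succ q =>
      simp only [List.getD_cons_succ] at hsm
      simp only [List.eraseIdx_cons_succ]
      rcases h with h | h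
      · exact Or.inl h
      · right
        by_cases hav : a = v
        · rw [if_pos hav] at h ⊢
          exact ih q (v + 1) (by simpa using hq) (by omega) h
        · rw [if_neg hav] at h ⊢
          exact ⟨h.1, ih q v (by simpa using hq) hsm h.2⟩

lemma P_append {D : ℕ} : ∀ (l : List ℕ) (v e : ℕ), P D v l → P D v (l ++ [e]) := by
  intro l
  induction l with
  | nil => intro v e h; exact Or.inl h
  | cons a t ih =>
    intro v e h
    rcases h with h | h
    · exact Or.inl h
    · right
      by_cases hav : a = v
      · rw [if_pos hav] at h ⊢; exact ih _ _ h
      · rw [if_neg hav] at h ⊢; exact ⟨h.1, ih _ _ h.2⟩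

lemma P_length {D : ℕ} : ∀ (Z : List ℕ) (v : ℕ), P D v Z → D + 1 - v ≤ Z.length := by
  intro Z
  induction Z with
  | nil =>
    intro v h
    have h' : D < v := h
    simp only [List.length_nil]; omega
  | cons a t ih =>
    intro v h
    simp only [List.length_cons]
    rcases h with h | h
    · omega
    · by_cases hav : a = v
      · rw [if_pos hav] at h; have := ih _ h; omega
      · rw [if_neg hav] at h; have := ih _ h.2; omega

lemma P_eq_range {D : ℕ} : ∀ (Z : List ℕ) (v : ℕ), P D v Z → Z.length = D + 1 - v →
    Z = List.range' v (D + 1 - v) := by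
  intro Z
  induction Z with
  | nil =>
    intro v h hlen
    rw [← hlen]
    rfl
  | cons a t ih =>
    intro v h hlen
    simp only [List.length_cons] at hlen
    rcases h with h | h
    · omega
    · by_cases hav : a = v
      · rw [if_pos hav] at h
        have hvD : v ≤ D := by
          by_contra hc
          have : D + 1 - v = 0 := by omega
          omega
        have ht : t = List.range' (v + 1) (D + 1 - (v + 1)) := ih (v + 1) h (by omega)
        have : D + 1 - v = (D + 1 - (v + 1)) + 1 := by omega
        rw [this, List.range'_succ, ← ht, hav]
      · rw [if_neg hav] at h
        have := P_length t v h.2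
        omega

lemma P_dropLast {D : ℕ} : ∀ (Z : List ℕ) (v : ℕ), P D v Z →
    P D v Z.dropLast ∨ ((∀ a ∈ Z.dropLast, a < D) ∧ Z.getLast? = some D) := by
  intro Z
  induction Z with
  | nil => intro v h; exact Or.inl h
  | cons a t ih =>
    intro v h
    by_cases hDv : D < v
    · exact Or.inl (P_of_lt hDv _)
    cases t with
    | nil =>
      rcases h with h | h
      · omega
      · by_cases hav : a = v
        · rw [if_pos hav] at h
          have hDv1 : D < v + 1 := h
          right
          refine ⟨by simp, ?_⟩
          simp only [List.getLast?_singleton]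
          congr 1
          omega
        · rw [if_neg hav] at h
          have : D < v := h.2
          omega
    | cons b t' =>
      have hdl : (a :: b :: t').dropLast = a :: (b :: t').dropLast := rfl
      rcases h with h | h
      · omega
      by_cases hav : a = v
      · rw [if_pos hav] at h
        by_cases hvD : v = D
        · left
          rw [hdl]
          right
          rw [if_pos hav]
          exact P_of_lt (by omega) _
        · rcases ih (v + 1) h with h' | h'
          · left
            rw [hdl]
            right
            rw [if_pos hav]
            exact h'
          · right
            rw [hdl]
            refine ⟨?_, h'.2⟩
            intro x hx
            rcases List.mem_cons.mp hx with hx | hx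
            · omega
            · exact h'.1 x hx
      · rw [if_neg hav] at h
        rcases ih v h.2 with h' | h'
        · left
          rw [hdl]
          right
          rw [if_neg hav]
          exact ⟨h.1, h'⟩
        · right
          rw [hdl]
          refine ⟨?_, h'.2⟩
          intro x hx
          rcases List.mem_cons.mp hx with hx | hx
          · have := h.1; omega
          · exact h'.1 x hx

lemma mem_of_all_lt {D : ℕ} (Z : List ℕ) (hZl : Z.length = D) (hnd : Z.Nodup)
    (h1 : ∀ a ∈ Z, 1 ≤ a) (hsm : ∀ a ∈ Z.dropLast, a < D) (m : ℕ)
    (hm1 : 1 ≤ m) (hmD : m < D) : m ∈ Z := by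
  have hsub : Z.dropLast.toFinset ⊆ Finset.Icc 1 (D - 1) := by
    intro a ha
    rw [List.mem_toFinset] at ha
    have haZ : a ∈ Z := (List.dropLast_sublist Z).subset ha
    rw [Finset.mem_Icc]
    exact ⟨h1 a haZ, by have := hsm a ha; omega⟩
  have hndd : Z.dropLast.Nodup := (List.dropLast_sublist Z).nodup hnd
  have hcard : Z.dropLast.toFinset.card = D - 1 := by
    rw [List.toFinset_card_of_nodup hndd, List.length_dropLast, hZl]
  have heq : Z.dropLast.toFinset = Finset.Icc 1 (D - 1) := by
    apply Finset.eq_of_subset_of_card_le hsub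
    rw [hcard, Nat.card_Icc]
    omega
  have : m ∈ Z.dropLast.toFinset := by
    rw [heq, Finset.mem_Icc]
    omega
  rw [List.mem_toFinset] at this
  exact (List.dropLast_sublist Z).subset this

lemma cons_eraseIdx_perm : ∀ (Z : List ℕ) (q : ℕ), q < Z.length →
    (Z.getD q 0 :: Z.eraseIdx q).Perm Z := by
  intro Z
  induction Z with
  | nil => intro q hq; simp at hq
  | cons a t ih =>
    intro q hq
    cases q with
    | zero => simp
    | succ q =>
      simp only [List.getD_cons_succ, List.eraseIdx_cons_succ]
      refine List.Perm.trans (List.Perm.swap a (t.getD q 0) (t.eraseIdx q)) ?_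
      exact (ih q (by simpa using hq)).cons a

lemma P_range {D : ℕ} : ∀ (k v : ℕ), v + k = D + 1 → P D v (List.range' v k) := by
  intro k
  induction k with
  | zero => intro v hv; exact (by omega : D < v)
  | succ k ih =>
    intro v hv
    rw [List.range'_succ]
    exact Or.inr (by rw [if_pos rfl]; exact ih (v + 1) (by omega))

lemma P_skip {D v : ℕ} {Z : List ℕ} (h0 : Z.getD 0 0 = v) (hZ : Z ≠ [])
    (h : P D (v + 1) Z) : P D v Z := by
  cases Z with
  | nil => exact absurd rfl hZ
  | cons a t =>
    rw [List.getD_cons_zero] at h0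
    have h' : D < v + 1 ∨ (if a = v + 1 then P D (v + 2) t else a < v + 1 ∧ P D (v + 1) t) := h
    refine Or.inr ?_
    rw [if_pos h0]
    rcases h' with h' | h'
    · exact P_of_lt (by omega) t
    · rw [if_neg (by omega : a ≠ v + 1)] at h'
      exact h'.2

lemma isVtx_rot {Δ D : ℕ} {Z : List ℕ} (hZ : IsVtx Δ D Z) {q : ℕ} (hq : q < D) :
    IsVtx Δ D (Z.getD q 0 :: Z.eraseIdx q) := by
  obtain ⟨hl, hnd, hbd⟩ := hZ
  have hq' : q < Z.length := by omega
  have hperm := cons_eraseIdx_perm Z q hq'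
  refine ⟨by rw [hperm.length_eq, hl], hperm.nodup_iff.mpr hnd, ?_⟩
  intro x hx
  exact hbd x (hperm.mem_iff.mp hx)

lemma isVtx_shift {Δ D : ℕ} {Z : List ℕ} (hZ : IsVtx Δ D Z) {y : ℕ} (hy : y ∉ Z)
    (hy1 : 1 ≤ y) (hy2 : y ≤ Δ + 1) (hD : 1 ≤ D) : IsVtx Δ D (y :: Z.dropLast) := by
  obtain ⟨hl, hnd, hbd⟩ := hZ
  refine ⟨by simp only [List.length_cons, List.length_dropLast, hl]; omega, ?_, ?_⟩
  · refine List.Nodup.cons ?_ ((List.dropLast_sublist Z).nodup hnd)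
    intro hmem
    exact hy ((List.dropLast_sublist Z).subset hmem)
  · intro x hx
    rcases List.mem_cons.mp hx with hx | hx
    · subst hx; exact ⟨hy1, hy2⟩
    · exact hbd x ((List.dropLast_sublist Z).subset hx)

lemma walk_cons {V : Type*} {A : V → V → Prop} {u z v : V} {n : ℕ} {w : ℕ → V}
    (ha : A u z) (hz : w 0 = z) (hw : IsWalk A z v n w) :
    IsWalk A u v (n + 1) (fun i => if i = 0 then u else w (i - 1)) := by
  obtain ⟨h0, hn, he⟩ := hw
  refine ⟨by simp, by simp [hn], ?_⟩
  intro i hi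
  cases i with
  | zero => simpa [hz] using ha
  | succ i =>
    have h1 : (i + 1 : ℕ) ≠ 0 := by omega
    have h2 : (i + 1 + 1 : ℕ) ≠ 0 := by omega
    simp only [if_neg h1, if_neg h2, Nat.add_sub_cancel]
    exact he i (by omega)

lemma P_backstep {Δ D u : ℕ} {Z Z' : List ℕ} (hD : 1 ≤ D) (hadj : adjR Δ D 0 Z Z')
    (h : P D u Z') : P D (u + 1) Z := by
  obtain ⟨⟨hl, hnd, hbd⟩, hZ', hcase⟩ := hadj
  rcases hcase with ⟨j, hj1, hj2, hEq⟩ | ⟨y, hy, hEq⟩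
  · subst hEq
    have h' : D < u ∨ (if Z.getD j 0 = u then P D (u + 1) (Z.eraseIdx j)
        else Z.getD j 0 < u ∧ P D u (Z.eraseIdx j)) := h
    rcases h' with h' | h'
    · exact P_of_lt (by omega) Z
    · by_cases hc : Z.getD j 0 = u
      · rw [if_pos hc] at h'
        exact P_insert Z j (u + 1) (by omega) (by omega) h'
      · rw [if_neg hc] at h'
        exact P_insert Z j (u + 1) (by omega) (by omega)
          (P_mono _ (Nat.le_succ u) h'.2)
  · subst hEq
    have hZne : Z ≠ [] := by
      intro h0
      rw [h0] at hl
      simp at hl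
      omega
    have hZdl : Z.dropLast ++ [Z.getLast hZne] = Z := List.dropLast_append_getLast hZne
    have h' : D < u ∨ (if y = u then P D (u + 1) Z.dropLast
        else y < u ∧ P D u Z.dropLast) := h
    rcases h' with h' | h'
    · exact P_of_lt (by omega) Z
    · by_cases hc : y = u
      · rw [if_pos hc] at h'
        rw [← hZdl]
        exact P_append _ _ _ h'
      · rw [if_neg hc] at h'
        rw [← hZdl]
        exact P_append _ _ _ (P_mono _ (Nat.le_succ u) h'.2)

lemma walk_P {Δ D : ℕ} (hD : 1 ≤ D) : ∀ (n : ℕ) (X : List ℕ) (w : ℕ → List ℕ),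
    IsWalk (adjR Δ D 0) X (List.range' 1 D) n w → P D (n + 1) X := by
  intro n
  induction n with
  | zero =>
    intro X w hw
    have hXY : X = List.range' 1 D := by rw [← hw.1, hw.2.1]
    rw [hXY]
    exact P_range D 1 (by omega)
  | succ n ih =>
    intro X w hw
    obtain ⟨h0, hn, he⟩ := hw
    have hadj : adjR Δ D 0 X (w 1) := h0 ▸ he 0 (by omega)
    have htail : IsWalk (adjR Δ D 0) (w 1) (List.range' 1 D) n (fun i => w (i + 1)) :=
      ⟨rfl, hn, fun i hi => he (i + 1) (by omega)⟩
    exact P_backstep hD hadj (ih _ _ htail)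

lemma greedy {Δ D : ℕ} (hD : 1 ≤ D) (hΔ : D ≤ Δ) : ∀ (v : ℕ), v ≤ D → ∀ (Z : List ℕ),
    IsVtx Δ D Z → P D (v + 1) Z → Z.getD 0 0 ≠ v →
    ∃ w, IsWalk (adjR Δ D 0) Z (List.range' 1 D) v w := by
  intro v
  induction v with
  | zero =>
    intro _ Z hZ hP _
    have hZY : Z = List.range' 1 D := P_eq_range Z 1 hP (by rw [hZ.1]; omega)
    exact ⟨fun _ => Z, rfl, hZY, fun i hi => absurd hi (by omega)⟩
  | succ v ih =>
    intro hvD Z hZ hP h0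
    by_cases hvZ : (v + 1) ∈ Z
    · -- rotation: bring v+1 to the front
      obtain ⟨q, hq, hq2⟩ := List.mem_iff_getElem.mp hvZ
      have hgd : Z.getD q 0 = v + 1 := by rw [List.getD_eq_getElem _ _ hq, hq2]
      have hq0 : q ≠ 0 := by
        intro hq0
        subst hq0
        exact h0 hgd
      have hqD : q < D := by rw [← hZ.1]; exact hq
      have hZ1 : IsVtx Δ D (Z.getD q 0 :: Z.eraseIdx q) := isVtx_rot hZ hqD
      have hadj : adjR Δ D 0 Z (Z.getD q 0 :: Z.eraseIdx q) :=
        ⟨hZ, hZ1, Or.inl ⟨q, by omega, hqD, rfl⟩⟩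
      have hP1 : P D (v + 1) (Z.getD q 0 :: Z.eraseIdx q) := by
        refine Or.inr ?_
        rw [if_pos hgd]
        exact P_erase Z q (v + 2) hq (by omega) hP
      have hZ10 : (Z.getD q 0 :: Z.eraseIdx q).getD 0 0 ≠ v := by
        rw [List.getD_cons_zero, hgd]; omega
      obtain ⟨w, hw⟩ := ih (by omega) _ hZ1 hP1 hZ10
      exact ⟨_, walk_cons hadj hw.1 hw⟩
    · -- shift with letter v+1
      have hPdl : P D (v + 2) Z.dropLast := by
        by_cases hbig : D < v + 2
        · exact P_of_lt hbig _
        rcases P_dropLast Z (v + 2) hP with h | h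
        · exact h
        · exfalso
          exact hvZ (mem_of_all_lt Z hZ.1 hZ.2.1 (fun a ha => (hZ.2.2 a ha).1) h.1
            (v + 1) (by omega) (by omega))
      have hZ1 : IsVtx Δ D ((v + 1) :: Z.dropLast) :=
        isVtx_shift hZ hvZ (by omega) (by omega) hD
      have hadj : adjR Δ D 0 Z ((v + 1) :: Z.dropLast) :=
        ⟨hZ, hZ1, Or.inr ⟨v + 1, hvZ, rfl⟩⟩
      have hP1 : P D (v + 1) ((v + 1) :: Z.dropLast) := by
        refine Or.inr ?_
        rw [if_pos rfl]
        exact hPdl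
      have hZ10 : ((v + 1) :: Z.dropLast).getD 0 0 ≠ v := by
        rw [List.getD_cons_zero]; omega
      obtain ⟨w, hw⟩ := ih (by omega) _ hZ1 hP1 hZ10
      exact ⟨_, walk_cons hadj hw.1 hw⟩





lemma P_split {D : ℕ} : ∀ (X : List ℕ), P D D X →
    ∃ l₁ l₂, X = l₁ ++ D :: l₂ ∧ ∀ a ∈ l₁, a < D := by
  intro X
  induction X with
  | nil => intro h; exact absurd (h : D < D) (Nat.lt_irrefl D)
  | cons a t ih =>
    intro h
    rcases (h : D < D ∨ (if a = D then P D (D + 1) t else a < D ∧ P D D t)) with h | h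
    · omega
    · by_cases haD : a = D
      · exact ⟨[], t, by rw [haD]; rfl, by simp⟩
      · rw [if_neg haD] at h
        obtain ⟨l₁, l₂, he, hlt⟩ := ih h.2
        refine ⟨a :: l₁, l₂, by rw [he]; rfl, ?_⟩
        intro x hx
        rcases List.mem_cons.mp hx with hx | hx
        · subst hx; exact h.1
        · exact hlt x hx

lemma split_P {D : ℕ} : ∀ (l₁ l₂ : List ℕ), (∀ a ∈ l₁, a < D) → P D D (l₁ ++ D :: l₂) := by
  intro l₁
  induction l₁ with
  | nil =>
    intro l₂ _
    exact Or.inr (by rw [if_pos rfl]; exact P_of_lt (by omega) l₂)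
  | cons a t ih =>
    intro l₂ hlt
    have ha : a < D := hlt a List.mem_cons_self
    refine Or.inr ?_
    rw [if_neg (by omega : a ≠ D)]
    exact ⟨ha, ih l₂ (fun x hx => hlt x (List.mem_cons_of_mem a hx))⟩

theorem dist_eq_D_iff (Δ D : ℕ) (hD : 2 ≤ D) (hΔ : D ≤ Δ)
    (X : List ℕ) (hX : IsVtx Δ D X) :
    cpDist (adjR Δ D 0) X (List.range' 1 D) = D ↔
      (D ∉ X ∨ ∃ j < D, X.getD j 0 = D ∧ ∃ r < j, D < X.getD r 0) := by
  have hD1 : 1 ≤ D := by omega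
  have hXlen : X.length = D := hX.1
  have hXne : X ≠ [] := by intro h; rw [h] at hXlen; simp at hXlen; omega
  constructor
  · intro hdist
    by_contra hcond
    push_neg at hcond
    obtain ⟨hmem, hpos⟩ := hcond
    obtain ⟨l₁, l₂, hsplit⟩ := List.append_of_mem hmem
    have hl₁D : l₁.length < D := by
      rw [hsplit] at hXlen
      simp only [List.length_append, List.length_cons] at hXlen
      omega
    have hjD : X.getD l₁.length 0 = D := by
      rw [hsplit, List.getD_append_right _ _ _ _ le_rfl]
      simp
    have hall : ∀ a ∈ l₁, a < D := by
      intro a ha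
      obtain ⟨r, hr, hra⟩ := List.mem_iff_getElem.mp ha
      have h1 : X.getD r 0 = a := by
        rw [hsplit, List.getD_append _ _ _ _ hr, List.getD_eq_getElem _ _ hr, hra]
      have h2 : X.getD r 0 ≤ D := hpos l₁.length hl₁D hjD r hr
      have hnd : a ≠ D := by
        have hdisj := List.disjoint_of_nodup_append (hsplit ▸ hX.2.1)
        intro hEq
        exact hdisj ha (hEq ▸ (List.mem_cons_self (a := D) (l := l₂)))
      omega
    have hPX : P D D X := hsplit ▸ split_P l₁ l₂ hall
    have hfin : ∃ n < D, ∃ w, IsWalk (adjR Δ D 0) X (List.range' 1 D) n w := by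
      by_cases hh : X.getD 0 0 = D - 1
      · have hPX' : P D (D - 1) X := P_skip hh hXne (P_mono X (by omega) hPX)
        obtain ⟨w, hw⟩ := greedy hD1 hΔ (D - 2) (by omega) X hX
          (P_mono X (by omega) hPX')
          (by rw [hh]; omega)
        exact ⟨D - 2, by omega, w, hw⟩
      · obtain ⟨w, hw⟩ := greedy hD1 hΔ (D - 1) (by omega) X hX
          (P_mono X (by omega) hPX) hh
        exact ⟨D - 1, by omega, w, hw⟩
    obtain ⟨n, hn, w, hw⟩ := hfin
    have hle : cpDist (adjR Δ D 0) X (List.range' 1 D) ≤ n := Nat.sInf_le ⟨w, hw⟩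
    omega
  · intro hcond
    have hmemS : ∃ w, IsWalk (adjR Δ D 0) X (List.range' 1 D) D w := by
      rcases hcond with hDX | ⟨j, hj, hgd, r, hr, hgr⟩
      · have hne : X.getD 0 0 ≠ D := by
          intro hEq
          apply hDX
          rw [← hEq]
          rw [List.getD_eq_getElem _ _ (by omega : 0 < X.length)]
          exact List.getElem_mem _
        exact greedy hD1 hΔ D le_rfl X hX (P_of_lt (by omega) X) hne
      · have hjD : j < D := hj
        have hX₁ : IsVtx Δ D (X.getD j 0 :: X.eraseIdx j) := isVtx_rot hX hjD
        have hadj : adjR Δ D 0 X (X.getD j 0 :: X.eraseIdx j) :=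
          ⟨hX, hX₁, Or.inl ⟨j, by omega, hjD, rfl⟩⟩
        have hP1 : P D D (X.getD j 0 :: X.eraseIdx j) := by
          refine Or.inr ?_
          rw [if_pos hgd]
          exact P_of_lt (by omega) _
        have hh : (X.getD j 0 :: X.eraseIdx j).getD 0 0 ≠ D - 1 := by
          rw [List.getD_cons_zero, hgd]; omega
        obtain ⟨w, hw⟩ := greedy hD1 hΔ (D - 1) (by omega) _ hX₁
          (P_mono _ (by omega) hP1) hh
        have hDeq : D - 1 + 1 = D := by omega
        exact ⟨_, hDeq ▸ walk_cons hadj hw.1 hw⟩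
    have hlb : ∀ n ∈ {n | ∃ w, IsWalk (adjR Δ D 0) X (List.range' 1 D) n w}, D ≤ n := by
      rintro n ⟨w, hw⟩
      by_contra hn
      push_neg at hn
      have hPX : P D D X := P_mono X (by omega) (walk_P hD1 n X w hw)
      obtain ⟨l₁, l₂, hsplit, hall⟩ := P_split X hPX
      rcases hcond with hDX | ⟨j, hj, hgd, r, hr, hgr⟩
      · exact hDX (hsplit ▸ List.mem_append_right l₁ List.mem_cons_self)
      · -- show j = l₁.length, then contradiction with hgr
        have hl₁D : l₁.length < D := by
          rw [hsplit] at hXlen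
          simp only [List.length_append, List.length_cons] at hXlen
          omega
        have hjl : j = l₁.length := by
          by_contra hne
          rcases Nat.lt_or_ge j l₁.length with hlt | hge
          · have : X.getD j 0 = l₁.getD j 0 := by
              rw [hsplit, List.getD_append _ _ _ _ hlt]
            have hmem : l₁.getD j 0 ∈ l₁ := by
              rw [List.getD_eq_getElem _ _ hlt]
              exact List.getElem_mem _
            have := hall _ hmem
            omega
          · have hgt : l₁.length < j := by omega
            have hDl₂ : D ∈ l₂ := by
              have h1 : X.getD j 0 = (D :: l₂).getD (j - l₁.length) 0 := by
                rw [hsplit, List.getD_append_right _ _ _ _ (by omega)]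
              have hjlen : j - l₁.length < (D :: l₂).length := by
                rw [hsplit] at hXlen
                simp only [List.length_append, List.length_cons] at hXlen ⊢
                omega
              obtain ⟨k, hk⟩ : ∃ k, j - l₁.length = k + 1 := ⟨j - l₁.length - 1, by omega⟩
              have h2 : (D :: l₂).getD (j - l₁.length) 0 = l₂.getD k 0 := by
                rw [hk, List.getD_cons_succ]
              have hkl : k < l₂.length := by
                simp only [List.length_cons] at hjlen
                omega
              have h3 : l₂.getD k 0 = l₂[k] := List.getD_eq_getElem _ _ hkl
              have h4 : l₂[k] = D := by rw [← h3, ← h2, ← h1, hgd]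
              exact h4 ▸ List.getElem_mem hkl
            have hndc : (D :: l₂).Nodup := ((List.nodup_append.mp (hsplit ▸ hX.2.1)).2).1
            exact (List.nodup_cons.mp hndc).1 hDl₂
        -- now r < j = l₁.length, X.getD r 0 ∈ l₁ so < D, contradicting D < X.getD r 0
        have hrl : r < l₁.length := hjl ▸ hr
        have : X.getD r 0 = l₁.getD r 0 := by
          rw [hsplit, List.getD_append _ _ _ _ hrl]
        have hmem : l₁.getD r 0 ∈ l₁ := by
          rw [List.getD_eq_getElem _ _ hrl]
          exact List.getElem_mem _
        have := hall _ hmem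
        omega
    exact le_antisymm (Nat.sInf_le hmemS) (le_csInf ⟨D, hmemS⟩ hlb)
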